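/- The alternative recurrence H_{n+1}(x,s,q) = q^n x H_n(x/q, s, q) − q^n [n]_q s H_{n−1}(x/q, s, q) holds for the q-Hermite polynomials. -/

import Mathlib

noncomputable section

/-- The q-integer `[n]_q = (1 - q^n)/(1 - q)`. -/
def qnat (q : ℝ) (n : ℕ) : ℝ := (1 - q ^ n) / (1 - q)

/-- The q-factorial `[n]_q!`. -/
def qfac (q : ℝ) (n : ℕ) : ℝ := ∏ j ∈ Finset.range n, qnat q (j + 1)

/-- The Gaussian binomial coefficient. -/
def qbinom (q : ℝ) (n k : ℕ) : ℝ := qfac q n / (qfac q k * qfac q (n - k))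

/-- The odd q-double factorial `[2k-1]_q!! = [1]_q [3]_q ⋯ [2k-1]_q`. -/
def qdf (q : ℝ) (k : ℕ) : ℝ := ∏ i ∈ Finset.range k, qnat q (2 * i + 1)

/-- The bivariate q-Hermite polynomial
`H n (x,s,q) = ∑_{2k ≤ n} (-s)^k q^(k²) qbinom(n,2k) [2k-1]_q!! x^(n-2k)`. -/
def qHermite (q s : ℝ) (n : ℕ) (x : ℝ) : ℝ :=
  ∑ k ∈ Finset.range (n / 2 + 1),
    (-s) ^ k * q ^ (k ^ 2) * qbinom q n (2 * k) * qdf q k * x ^ (n - 2 * k)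

end

section helper
variable {q : ℝ}

lemma qnat_pos (hq : 0 < q) (hq1 : q < 1) (n : ℕ) : 0 < qnat q (n + 1) := by
  have h1 : q ^ (n + 1) < 1 := pow_lt_one₀ hq.le hq1 (Nat.succ_ne_zero n)
  exact div_pos (by linarith) (by linarith)

lemma qnat_ne (hq : 0 < q) (hq1 : q < 1) (n : ℕ) : qnat q (n + 1) ≠ 0 :=
  (qnat_pos hq hq1 n).ne'

lemma qfac_succ (n : ℕ) : qfac q (n + 1) = qfac q n * qnat q (n + 1) :=
  Finset.prod_range_succ _ _

lemma qfac_pos (hq : 0 < q) (hq1 : q < 1) (n : ℕ) : 0 < qfac q n := by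
  induction n with
  | zero => simp [qfac]
  | succ n ih => rw [qfac_succ]; exact mul_pos ih (qnat_pos hq hq1 n)

lemma qfac_ne (hq : 0 < q) (hq1 : q < 1) (n : ℕ) : qfac q n ≠ 0 :=
  (qfac_pos hq hq1 n).ne'

lemma qfac_zero : qfac q 0 = 1 := by simp [qfac]

lemma qdf_succ (k : ℕ) : qdf q (k + 1) = qdf q k * qnat q (2 * k + 1) :=
  Finset.prod_range_succ _ _

lemma qnat_split (hq1 : q < 1) (a b : ℕ) :
    qnat q (a + b) = qnat q a + q ^ a * qnat q b := by
  have h : (1 : ℝ) - q ≠ 0 := by intro h; apply absurd hq1; linarith [sub_eq_zero.mp h]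
  unfold qnat
  field_simp
  rw [pow_add]
  ring

lemma qbinom_self (hq : 0 < q) (hq1 : q < 1) (n : ℕ) : qbinom q n n = 1 := by
  simp [qbinom, qfac_zero, div_self (qfac_ne hq hq1 n)]

lemma qbinom_zero (hq : 0 < q) (hq1 : q < 1) (n : ℕ) : qbinom q n 0 = 1 := by
  simp [qbinom, qfac_zero, div_self (qfac_ne hq hq1 n)]

lemma pascal (hq : 0 < q) (hq1 : q < 1) (m d : ℕ) :
    qbinom q (m + 2 + d) (m + 1)
      = q ^ (m + 1) * qbinom q (m + 1 + d) (m + 1) + qbinom q (m + 1 + d) m := by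
  have h1 : m + 2 + d - (m + 1) = d + 1 := by omega
  have h2 : m + 1 + d - (m + 1) = d := by omega
  have h3 : m + 1 + d - m = d + 1 := by omega
  unfold qbinom
  rw [h1, h2, h3]
  have e1 : qfac q (m + 2 + d) = qfac q (m + 1 + d) * qnat q (m + 2 + d) := by
    have h : m + 2 + d = (m + 1 + d) + 1 := by omega
    rw [h, qfac_succ]
  have e2 : qfac q (d + 1) = qfac q d * qnat q (d + 1) := qfac_succ d
  have e3 : qfac q (m + 1) = qfac q m * qnat q (m + 1) := qfac_succ m
  have hs : qnat q (m + 2 + d) = qnat q (m + 1) + q ^ (m + 1) * qnat q (d + 1) := by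
    have h : m + 2 + d = (m + 1) + (d + 1) := by omega
    rw [h, qnat_split hq1]
  rw [e1, e2, e3, hs]
  have f1 := qfac_ne hq hq1 m
  have f2 := qfac_ne hq hq1 d
  have f3 := qfac_ne hq hq1 (m + 1 + d)
  have g1 := qnat_ne hq hq1 m
  have g2 := qnat_ne hq hq1 d
  field_simp
  ring

lemma lemma1 (hq : 0 < q) (hq1 : q < 1) (m d : ℕ) :
    qnat q (m + 1 + d) * qbinom q (m + d) m
      = qnat q (m + 1) * qbinom q (m + 1 + d) (m + 1) := by
  have h1 : m + d - m = d := by omega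
  have h2 : m + 1 + d - (m + 1) = d := by omega
  unfold qbinom
  rw [h1, h2]
  have e1 : qfac q (m + 1 + d) = qfac q (m + d) * qnat q (m + 1 + d) := by
    have h : m + 1 + d = (m + d) + 1 := by omega
    rw [h, qfac_succ]
  have e3 : qfac q (m + 1) = qfac q m * qnat q (m + 1) := qfac_succ m
  rw [e1, e3]
  have f1 := qfac_ne hq hq1 m
  have f2 := qfac_ne hq hq1 d
  have f3 := qfac_ne hq hq1 (m + d)
  have g1 := qnat_ne hq hq1 m
  have g2 := qnat_ne hq hq1 d
  field_simp
end helper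

section main
variable {q : ℝ}

-- middle term identity
lemma midterm (hq : 0 < q) (hq1 : q < 1) (s x : ℝ) (n k : ℕ) (h : 2 * (k + 1) ≤ n) :
    (-s) ^ (k+1) * q ^ ((k+1) ^ 2) * qbinom q (n + 1) (2 * (k+1)) * qdf q (k+1) *
        x ^ (n + 1 - 2 * (k+1))
      = q ^ n * x *
          ((-s) ^ (k+1) * q ^ ((k+1) ^ 2) * qbinom q n (2 * (k+1)) * qdf q (k+1) *
            (x / q) ^ (n - 2 * (k+1)))
        - q ^ n * qnat q n * s *
          ((-s) ^ k * q ^ (k ^ 2) * qbinom q (n - 1) (2 * k) * qdf q k *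
            (x / q) ^ (n - 1 - 2 * k)) := by
  obtain ⟨e, rfl⟩ : ∃ e, n = 2 * k + 2 + e := ⟨n - (2 * k + 2), by omega⟩
  have s1 : 2 * k + 2 + e + 1 - 2 * (k + 1) = e + 1 := by omega
  have s2 : 2 * k + 2 + e - 2 * (k + 1) = e := by omega
  have s3 : 2 * k + 2 + e - 1 - 2 * k = e + 1 := by omega
  have s4 : 2 * k + 2 + e - 1 = 2 * k + 1 + e := by omega
  rw [s1, s2, s3, s4]
  -- Pascal: qbinom (n+1) (2k+2) = q^(2k+2) * qbinom n (2k+2) + qbinom n (2k+1)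
  have hp : qbinom q (2 * k + 2 + e + 1) (2 * (k + 1))
      = q ^ (2 * k + 2) * qbinom q (2 * k + 2 + e) (2 * (k + 1))
          + qbinom q (2 * k + 2 + e) (2 * k + 1) := by
    have h1 : 2 * k + 2 + e + 1 = (2 * k + 1) + 2 + e := by omega
    have h2 : 2 * k + 2 + e = (2 * k + 1) + 1 + e := by omega
    have h3 : 2 * (k + 1) = (2 * k + 1) + 1 := by omega
    rw [h1, h2, h3, pascal hq hq1]
  -- lemma1: [n] * qbinom (n-1) (2k) = [2k+1] * qbinom n (2k+1)
  have hl : qnat q (2 * k + 2 + e) * qbinom q (2 * k + 1 + e) (2 * k)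
      = qnat q (2 * k + 1) * qbinom q (2 * k + 2 + e) (2 * k + 1) := by
    have h1 : 2 * k + 2 + e = 2 * k + 1 + (e + 1) := by omega
    have h2 : 2 * k + 1 + e = 2 * k + (e + 1) := by omega
    rw [h1, h2, lemma1 hq hq1]
  have hdf : qdf q (k + 1) = qdf q k * qnat q (2 * k + 1) := qdf_succ k
  have hx : (x / q) ^ e = x ^ e / q ^ e := div_pow x q e
  have hx2 : (x / q) ^ (e + 1) = x ^ (e + 1) / q ^ (e + 1) := div_pow x q (e + 1)
  have hsq : ((k : ℕ) + 1) ^ 2 = k ^ 2 + (2 * k + 1) := by ring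
  have hqe : (q : ℝ) ^ e ≠ 0 := pow_ne_zero e hq.ne'
  have hqe1 : (q : ℝ) ^ (e + 1) ≠ 0 := pow_ne_zero (e + 1) hq.ne'
  rw [hp, hdf, hx, hx2, hsq]
  field_simp
  linear_combination (q ^ (2*k+2*e+2) * s * (-s)^k * q^(k^2) * qdf q k * x^(e+1)) * hl

end main

lemma zeroterm (hq : 0 < q) (hq1 : q < 1) (s x : ℝ) (n : ℕ) :
    (-s) ^ 0 * q ^ (0 ^ 2) * qbinom q (n + 1) (2 * 0) * qdf q 0 * x ^ (n + 1 - 2 * 0)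
      = q ^ n * x *
          ((-s) ^ 0 * q ^ (0 ^ 2) * qbinom q n (2 * 0) * qdf q 0 * (x / q) ^ (n - 2 * 0)) := by
  simp only [pow_zero, Nat.mul_zero, Nat.sub_zero, one_mul, mul_one,
    qbinom_zero hq hq1, qdf]
  simp only [Finset.range_zero, Finset.prod_empty, mul_one, one_mul]
  rw [div_pow, pow_succ]
  field_simp
  ring

lemma topterm (hq : 0 < q) (hq1 : q < 1) (s x : ℝ) (t : ℕ) :
    (-s) ^ (t + 1) * q ^ ((t + 1) ^ 2) * qbinom q (2 * t + 1 + 1) (2 * (t + 1)) *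
        qdf q (t + 1) * x ^ (2 * t + 1 + 1 - 2 * (t + 1))
      = -(q ^ (2 * t + 1) * qnat q (2 * t + 1) * s *
          ((-s) ^ t * q ^ (t ^ 2) * qbinom q (2 * t + 1 - 1) (2 * t) * qdf q t *
            (x / q) ^ (2 * t + 1 - 1 - 2 * t))) := by
  have h1 : 2 * t + 1 + 1 = 2 * (t + 1) := by omega
  have h2 : 2 * t + 1 - 1 = 2 * t := by omega
  have h3 : 2 * t - 2 * t = 0 := by omega
  have h4 : 2 * (t + 1) - 2 * (t + 1) = 0 := by omega
  rw [h1, h2, h3, h4, qbinom_self hq hq1, qbinom_self hq hq1, qdf_succ]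
  have hsq : (t + 1) ^ 2 = t ^ 2 + (2 * t + 1) := by ring
  rw [hsq, pow_add]
  ring

theorem qHermite_alt_recurrence (q : ℝ) (hq : 0 < q) (hq1 : q < 1) (s x : ℝ) (n : ℕ) :
    qHermite q s (n + 1) x =
      q ^ n * x * qHermite q s n (x / q)
        - q ^ n * qnat q n * s * qHermite q s (n - 1) (x / q) := by
  rcases Nat.even_or_odd' n with ⟨t, rfl | rfl⟩
  · rcases t with _ | u
    · -- n = 0
      have h0 : qnat q 0 = 0 := by simp [qnat]
      simp [qHermite, qbinom_zero hq hq1, qdf, h0]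
    · -- n = 2*(u+1) = 2*u+2
      rw [show 2 * (u + 1) = 2 * u + 2 from by ring]
      unfold qHermite
      rw [show (2 * u + 2 + 1) / 2 + 1 = (u + 1) + 1 from by omega,
          show (2 * u + 2) / 2 + 1 = (u + 1) + 1 from by omega,
          show (2 * u + 2 - 1) / 2 + 1 = u + 1 from by omega]
      rw [Finset.sum_range_succ' _ (u + 1), Finset.sum_range_succ' _ (u + 1)]
      rw [zeroterm hq hq1 s x (2 * u + 2)]
      have hmid : ∑ k ∈ Finset.range (u + 1),
          (-s) ^ (k + 1) * q ^ ((k + 1) ^ 2) * qbinom q (2 * u + 2 + 1) (2 * (k + 1)) *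
            qdf q (k + 1) * x ^ (2 * u + 2 + 1 - 2 * (k + 1))
          = ∑ k ∈ Finset.range (u + 1),
            (q ^ (2 * u + 2) * x *
              ((-s) ^ (k + 1) * q ^ ((k + 1) ^ 2) * qbinom q (2 * u + 2) (2 * (k + 1)) *
                qdf q (k + 1) * (x / q) ^ (2 * u + 2 - 2 * (k + 1)))
            - q ^ (2 * u + 2) * qnat q (2 * u + 2) * s *
              ((-s) ^ k * q ^ (k ^ 2) * qbinom q (2 * u + 2 - 1) (2 * k) * qdf q k *
                (x / q) ^ (2 * u + 2 - 1 - 2 * k))) := by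
        refine Finset.sum_congr rfl fun k hk => ?_
        exact midterm hq hq1 s x (2 * u + 2) k (by
          have := Finset.mem_range.mp hk; omega)
      rw [hmid, Finset.sum_sub_distrib, ← Finset.mul_sum, ← Finset.mul_sum]
      ring
  · -- n = 2*t+1
    unfold qHermite
    rw [show (2 * t + 1 + 1) / 2 + 1 = (t + 1) + 1 from by omega,
        show (2 * t + 1) / 2 + 1 = t + 1 from by omega,
        show (2 * t + 1 - 1) / 2 + 1 = t + 1 from by omega]
    rw [Finset.sum_range_succ _ (t + 1), Finset.sum_range_succ' _ t,
        Finset.sum_range_succ' _ t, Finset.sum_range_succ _ t]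
    rw [zeroterm hq hq1 s x (2 * t + 1), topterm hq hq1 s x t]
    have hmid : ∑ k ∈ Finset.range t,
        (-s) ^ (k + 1) * q ^ ((k + 1) ^ 2) * qbinom q (2 * t + 1 + 1) (2 * (k + 1)) *
          qdf q (k + 1) * x ^ (2 * t + 1 + 1 - 2 * (k + 1))
        = ∑ k ∈ Finset.range t,
          (q ^ (2 * t + 1) * x *
            ((-s) ^ (k + 1) * q ^ ((k + 1) ^ 2) * qbinom q (2 * t + 1) (2 * (k + 1)) *
              qdf q (k + 1) * (x / q) ^ (2 * t + 1 - 2 * (k + 1)))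
          - q ^ (2 * t + 1) * qnat q (2 * t + 1) * s *
            ((-s) ^ k * q ^ (k ^ 2) * qbinom q (2 * t + 1 - 1) (2 * k) * qdf q k *
              (x / q) ^ (2 * t + 1 - 1 - 2 * k))) := by
      refine Finset.sum_congr rfl fun k hk => ?_
      exact midterm hq hq1 s x (2 * t + 1) k (by
        have := Finset.mem_range.mp hk; omega)
    rw [hmid, Finset.sum_sub_distrib, ← Finset.mul_sum, ← Finset.mul_sum]
    ring
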